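/- Let C be a k-element cap in (Z/2Z)^n. If some point p can be written as the sum of a 3-element subset of C in at least m distinct ways, then k ≥ 3m. -/
import Mathlib

def IsCap {n : ℕ} (S : Set (Fin n → ZMod 2)) : Prop :=
  ∀ a ∈ S, ∀ b ∈ S, ∀ c ∈ S, ∀ d ∈ S,
    a ≠ b → a ≠ c → a ≠ d → b ≠ c → b ≠ d → c ≠ d → a + b + c + d ≠ 0

lemma aux_self {n : ℕ} (a : Fin n → ZMod 2) : a + a = 0 := by
  funext i; exact CharTwo.add_self_eq_zero (a i)

theorem card_ge_of_mult {n : ℕ} (C : Finset (Fin n → ZMod 2))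
    (hC : IsCap (C : Set (Fin n → ZMod 2))) (p : Fin n → ZMod 2) (m : ℕ)
    (hm : m ≤ ((C.powersetCard 3).filter (fun t => t.sum id = p)).card) :
    3 * m ≤ C.card := by
  classical
  set F := (C.powersetCard 3).filter (fun t => t.sum id = p) with hF
  have hmem : ∀ t ∈ F, t ⊆ C ∧ t.card = 3 ∧ t.sum id = p := by
    intro t ht
    rw [hF, Finset.mem_filter, Finset.mem_powersetCard] at ht
    tauto
  have hdisj : ∀ t₁ ∈ F, ∀ t₂ ∈ F, t₁ ≠ t₂ → Disjoint t₁ t₂ := by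
    intro t₁ h₁ t₂ h₂ hne
    obtain ⟨hsub₁, hc₁, hs₁⟩ := hmem t₁ h₁
    obtain ⟨hsub₂, hc₂, hs₂⟩ := hmem t₂ h₂
    by_contra hd
    set s := (t₁ \ t₂) ∪ (t₂ \ t₁) with hs
    have hdisj' : Disjoint (t₁ \ t₂) (t₂ \ t₁) := by
      apply Finset.disjoint_left.mpr
      intro x hx hy
      exact (Finset.mem_sdiff.mp hy).2 (Finset.mem_sdiff.mp hx).1
    have e₁ : (t₁ \ t₂).sum id + (t₁ ∩ t₂).sum id = t₁.sum id := by
      rw [show t₁ \ t₂ = t₁ \ (t₁ ∩ t₂) by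
        ext x; simp [Finset.mem_sdiff, Finset.mem_inter]]
      rw [Finset.sum_sdiff Finset.inter_subset_left]
    have e₂ : (t₂ \ t₁).sum id + (t₁ ∩ t₂).sum id = t₂.sum id := by
      rw [show t₂ \ t₁ = t₂ \ (t₁ ∩ t₂) by
        ext x; simp [Finset.mem_sdiff, Finset.mem_inter]]
      rw [Finset.sum_sdiff Finset.inter_subset_right]
    have hsumzero : s.sum id = 0 := by
      have h3 : s.sum id = (t₁ \ t₂).sum id + (t₂ \ t₁).sum id := by
        rw [hs, Finset.sum_union hdisj']
      have h4 : (t₁ \ t₂).sum id + (t₂ \ t₁).sum id + ((t₁ ∩ t₂).sum id + (t₁ ∩ t₂).sum id)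
          = t₁.sum id + t₂.sum id := by
        rw [← e₁, ← e₂]; ring
      rw [aux_self, add_zero] at h4
      rw [h3, h4, hs₁, hs₂, aux_self]
    have hsubC : s ⊆ C := by
      intro x hx
      rcases Finset.mem_union.mp hx with h | h
      · exact hsub₁ (Finset.mem_sdiff.mp h).1
      · exact hsub₂ (Finset.mem_sdiff.mp h).1
    have hicard : (t₁ ∩ t₂).card ≠ 0 := by
      intro h
      exact hd (Finset.disjoint_iff_inter_eq_empty.mpr (Finset.card_eq_zero.mp h))
    have hine3 : (t₁ ∩ t₂).card ≠ 3 := by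
      intro h
      have h₁' : t₁ ∩ t₂ = t₁ := Finset.eq_of_subset_of_card_le Finset.inter_subset_left (by omega)
      have h₂' : t₁ ∩ t₂ = t₂ := Finset.eq_of_subset_of_card_le Finset.inter_subset_right (by omega)
      exact hne (h₁'.symm.trans h₂')
    have hq₁ := Finset.card_sdiff_add_card_inter t₁ t₂
    have hq₂ := Finset.card_sdiff_add_card_inter t₂ t₁
    rw [Finset.inter_comm] at hq₂
    have hile : (t₁ ∩ t₂).card ≤ 3 := by
      calc (t₁ ∩ t₂).card ≤ t₁.card := Finset.card_le_card Finset.inter_subset_left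
        _ = 3 := hc₁
    have hscard : s.card = 6 - 2 * (t₁ ∩ t₂).card := by
      rw [hs, Finset.card_union_of_disjoint hdisj']
      omega
    rcases (by omega : s.card = 4 ∨ s.card = 2) with h4 | h2
    · obtain ⟨a, s', has, hseq, hs'3⟩ := Finset.card_eq_succ.mp (by rw [h4] : s.card = 3 + 1)
      obtain ⟨b, c, d, hbc, hbd, hcd, rfl⟩ := Finset.card_eq_three.mp hs'3
      rw [← hseq] at hsumzero hsubC
      have hab : a ≠ b := by intro h; apply has; simp [h]
      have hac : a ≠ c := by intro h; apply has; simp [h]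
      have had : a ≠ d := by intro h; apply has; simp [h]
      have hsum : a + b + c + d = 0 := by
        rw [Finset.sum_insert has, Finset.sum_insert (by simp [hbc, hbd]),
          Finset.sum_insert (by simp [hcd]), Finset.sum_singleton] at hsumzero
        simpa [id, ← add_assoc] using hsumzero
      have hmemC : ∀ x ∈ insert a ({b, c, d} : Finset _), x ∈ (C : Set (Fin n → ZMod 2)) := by
        intro x hx; exact hsubC hx
      exact hC a (hmemC a (by simp)) b (hmemC b (by simp)) c (hmemC c (by simp))
        d (hmemC d (by simp)) hab hac had hbc hbd hcd hsum
    · obtain ⟨a, b, hab, habs⟩ := Finset.card_eq_two.mp h2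
      rw [habs, Finset.sum_pair hab] at hsumzero
      simp only [id] at hsumzero
      apply hab
      have h5 : a + b = b + b := by rw [hsumzero, aux_self]
      exact add_right_cancel h5
  have hunion : F.biUnion id ⊆ C := by
    intro x hx
    obtain ⟨t, ht, hxt⟩ := Finset.mem_biUnion.mp hx
    exact (hmem t ht).1 hxt
  have hcardU : (F.biUnion id).card = 3 * F.card := by
    have h6 : (F.biUnion id).card = ∑ t ∈ F, (id t).card := Finset.card_biUnion hdisj
    rw [h6, show (∑ t ∈ F, (id t).card) = ∑ _t ∈ F, 3 from
      Finset.sum_congr rfl (fun t ht => (hmem t ht).2.1)]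
    simp [mul_comm]
  calc 3 * m ≤ 3 * F.card := Nat.mul_le_mul_left 3 hm
    _ = (F.biUnion id).card := hcardU.symm
    _ ≤ C.card := Finset.card_le_card hunion
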